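/- Let M be a locally right Garside monoid, M₁ a closed submonoid of M, and M₁₁ a closed submonoid of M₁. Write t₁ = tail(z, M₁) for the maximal right divisor of z in M₁. Then for every z in M and every left divisor y of tail(z, M₁), one has tail((z·tail(z, M₁)⁻¹)·y, M₁₁) = tail(y, M₁₁). In particular tail(z, M₁₁) = tail(tail(z, M₁), M₁₁). -/
import Mathlib


/-- `y` right-divides `x`, i.e. `x` is a left multiple of `y`. -/
def RDiv {M : Type*} [Monoid M] (x y : M) : Prop := ∃ z, x = z * y

/-- `z` is a left lcm of `a` and `b`: it is a common left multiple of `a` and `b`, and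
every common left multiple of `a` and `b` is a left multiple of `z`. -/
def IsLeftLcm {M : Type*} [Monoid M] (z a b : M) : Prop :=
  RDiv z a ∧ RDiv z b ∧ ∀ w, RDiv w a → RDiv w b → RDiv w z

/-- A monoid is locally right Garside if it is right cancellative, any two elements
admitting a common left multiple admit a left lcm, and, for every `x`, there is no
infinite strictly increasing chain of right divisors of `x`. -/
structure LocallyRightGarside (M : Type*) [Monoid M] : Prop where
  rightCancel : ∀ x y z : M, x * z = y * z → x = y
  lcm : ∀ a b : M, (∃ w, RDiv w a ∧ RDiv w b) → ∃ z, IsLeftLcm z a b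
  noChain : ∀ x : M, ¬ ∃ f : ℕ → M,
      (∀ k, RDiv x (f k)) ∧ (∀ k, ∃ w, w ≠ 1 ∧ f (k + 1) = w * f k)

/-- `t` is the `A`-tail of `x`: a right divisor of `x` lying in `A` which is maximal
with respect to right divisibility. -/
def IsTail {M : Type*} [Monoid M] (A : Set M) (x t : M) : Prop :=
  t ∈ A ∧ RDiv x t ∧ ∀ a ∈ A, RDiv x a → RDiv t a

/-- A submonoid is closed if it is closed under left lcm and under left divisor. -/
def ClosedSubmonoid {M : Type*} [Monoid M] (M₁ : Submonoid M) : Prop :=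
  (∀ a ∈ M₁, ∀ b ∈ M₁, ∀ z : M, IsLeftLcm z a b → z ∈ M₁) ∧
  (∀ a ∈ M₁, ∀ y z : M, a = y * z → y ∈ M₁)

/-- In a locally right Garside monoid there are no nontrivial units:
if `s * p = 1` then `p = 1`. -/
lemma no_units {M : Type*} [Monoid M] (h : LocallyRightGarside M)
    (s p : M) (hsp : s * p = 1) : p = 1 := by
  by_contra hp
  apply h.noChain 1
  refine ⟨fun k => p ^ k, fun k => ⟨s ^ k, ?_⟩, fun k => ⟨p, hp, (pow_succ' p k)⟩⟩
  induction k with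
  | zero => simp
  | succ n ih =>
    show 1 = s ^ (n + 1) * p ^ (n + 1)
    simp only at ih
    rw [pow_succ' s n, pow_succ p n, mul_assoc, ← mul_assoc (s ^ n),
      ← ih, one_mul, hsp]

/-- Key lemma: if `t` is the `M₁`-tail of `z = w * t` and `t = y * c`, then every
element of `M₁` right-dividing `w * y` right-divides `y`. -/
lemma rdiv_transfer {M : Type*} [Monoid M] (h : LocallyRightGarside M)
    (M₁ : Submonoid M) (hc1 : ClosedSubmonoid M₁)
    (z t : M) (ht : IsTail (↑M₁) z t) (w : M) (hw : z = w * t)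
    (y c : M) (hyc : t = y * c)
    (a : M) (ha : a ∈ M₁) (hav : RDiv (w * y) a) : RDiv y a := by
  obtain ⟨v, hv⟩ := hav
  have hy : y ∈ M₁ := hc1.2 t ht.1 y c hyc
  obtain ⟨ℓ, hℓ⟩ := h.lcm y a ⟨w * y, ⟨w, rfl⟩, ⟨v, hv⟩⟩
  obtain ⟨⟨p, hp⟩, ⟨q, hq⟩, hmax⟩ := hℓ
  obtain ⟨r, hr⟩ := hmax (w * y) ⟨w, rfl⟩ ⟨v, hv⟩
  have hℓ1 : ℓ ∈ M₁ := hc1.1 y hy a ha ℓ ⟨⟨p, hp⟩, ⟨q, hq⟩, hmax⟩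
  have hpM : p ∈ M₁ := hc1.2 ℓ hℓ1 p y hp
  -- w = r * p
  have hwrp : w = r * p := by
    apply h.rightCancel _ _ y
    rw [hr, hp, mul_assoc]
  -- p * t right-divides z and lies in M₁
  have hpt : RDiv z (p * t) := ⟨r, by rw [hw, hwrp, mul_assoc]⟩
  obtain ⟨s, hs⟩ := ht.2.2 (p * t) (M₁.mul_mem hpM ht.1) hpt
  have hsp : s * p = 1 := by
    apply h.rightCancel _ _ t
    rw [one_mul, mul_assoc, ← hs]
  have hp1 : p = 1 := no_units h s p hsp
  exact ⟨q, by rw [← hq, hp, hp1, one_mul]⟩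

theorem tail_transitivity {M : Type*} [Monoid M]
    (h : LocallyRightGarside M) (M₁ M₁₁ : Submonoid M) (hle : M₁₁ ≤ M₁)
    (hc1 : ClosedSubmonoid M₁)
    (hc11lcm : ∀ a ∈ M₁₁, ∀ b ∈ M₁₁, ∀ z : M, IsLeftLcm z a b → z ∈ M₁₁)
    (hc11div : ∀ a ∈ M₁₁, ∀ y z : M, y ∈ M₁ → z ∈ M₁ → a = y * z → y ∈ M₁₁)
    (z t : M) (ht : IsTail (↑M₁) z t) (w : M) (hw : z = w * t) :
    (∀ y c : M, t = y * c →
      ∀ u : M, IsTail (↑M₁₁) (w * y) u ↔ IsTail (↑M₁₁) y u) ∧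
    (∀ u : M, IsTail (↑M₁₁) z u ↔ IsTail (↑M₁₁) t u) := by
  have main : ∀ y c : M, t = y * c →
      ∀ u : M, IsTail (↑M₁₁) (w * y) u ↔ IsTail (↑M₁₁) y u := by
    intro y c hyc u
    constructor
    · rintro ⟨hu1, hu2, hu3⟩
      refine ⟨hu1, rdiv_transfer h M₁ hc1 z t ht w hw y c hyc u (hle hu1) hu2, ?_⟩
      intro a ha hay
      obtain ⟨d, hd⟩ := hay
      exact hu3 a ha ⟨w * d, by rw [hd, mul_assoc]⟩
    · rintro ⟨hu1, ⟨d, hd⟩, hu3⟩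
      refine ⟨hu1, ⟨w * d, by rw [hd, mul_assoc]⟩, ?_⟩
      intro a ha haw
      exact hu3 a ha (rdiv_transfer h M₁ hc1 z t ht w hw y c hyc a (hle ha) haw)
  refine ⟨main, fun u => ?_⟩
  rw [hw]
  exact main t 1 (mul_one t).symm u
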